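/- Let n be a positive integer, 0 ≤ r ≤ n-1, and T = [r] = {1,2,...,r} ⊆ [n-1]. Then A^T_n(x) = Σ_{i=0}^r binom(n-r+i-1, i) · p_{r,i}(x), where p_{r,i}(x) = Σ x^{des(w)} summed over all permutations w ∈ S_{r+1} with w(1) = i+1. -/

import Mathlib

open Polynomial

open scoped Classical

noncomputable section

/-- The descent set of a permutation `w` of `Fin n`, recorded as a subset of
`{1, ..., n-1}` (1-based positions, as in the paper: `i ∈ Des(w)` iff `w(i) > w(i+1)`). -/
def descSet {n : ℕ} (w : Equiv.Perm (Fin n)) : Finset ℕ :=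
  (Finset.univ.filter (fun i : Fin (n - 1) =>
      w ⟨i.val + 1, by have := i.isLt; omega⟩ < w ⟨i.val, by have := i.isLt; omega⟩)).image
    (fun i => i.val + 1)

/-- `A^T_n(x) = Σ_{w ∈ S_n, Des(w) ⊆ T} x^{des(w)}` (note `Des(w) ⊆ {1,...,n-1}`
automatically, so this also realizes the convention `A^T_n := A^{T ∩ [n-1]}_n`). -/
def Apoly (n : ℕ) (T : Finset ℕ) : Polynomial ℝ :=
  ∑ w ∈ Finset.univ.filter (fun w : Equiv.Perm (Fin n) => descSet w ⊆ T),
    X ^ (descSet w).card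

/-- `p^T_{n,k}(x) = Σ x^{des(w)}` over permutations `w ∈ S_{n+1}` with `w(1) = k+1`
(0-based: `w 0 = k`) and `Des(w) ⊆ T`. -/
def ppoly (n k : ℕ) (T : Finset ℕ) : Polynomial ℝ :=
  ∑ w ∈ Finset.univ.filter (fun w : Equiv.Perm (Fin (n + 1)) =>
      (w 0 : ℕ) = k ∧ descSet w ⊆ T),
    X ^ (descSet w).card

/-- A real polynomial has only real roots (or is identically zero). -/
def RealRooted (p : Polynomial ℝ) : Prop :=
  p = 0 ∨ ∀ z : ℂ, Polynomial.aeval z p = 0 → z.im = 0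

/-- The list of real roots of `p`, with multiplicity, in decreasing order. -/
def rootsDesc (p : Polynomial ℝ) : List ℝ :=
  (p.roots.sort (· ≤ ·)).reverse

/-- `Interlaces p q` means `p ⪯ q`: both are real-rooted and, listing the roots of `p`
as `α_1 ≥ α_2 ≥ ⋯` and those of `q` as `β_1 ≥ β_2 ≥ ⋯`, one has
`⋯ ≤ α_2 ≤ β_2 ≤ α_1 ≤ β_1`; by convention the zero polynomial interlaces and is
interlaced by every real-rooted polynomial. -/
def Interlaces (p q : Polynomial ℝ) : Prop :=
  (p = 0 ∧ RealRooted q) ∨ (q = 0 ∧ RealRooted p) ∨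
  (RealRooted p ∧ RealRooted q ∧
    Multiset.card q.roots ≤ Multiset.card p.roots + 1 ∧
    Multiset.card p.roots ≤ Multiset.card q.roots ∧
    (∀ (i : ℕ) (hp : i < (rootsDesc p).length) (hq : i < (rootsDesc q).length),
      (rootsDesc p).get ⟨i, hp⟩ ≤ (rootsDesc q).get ⟨i, hq⟩) ∧
    (∀ (i : ℕ) (hq : i + 1 < (rootsDesc q).length) (hp : i < (rootsDesc p).length),
      (rootsDesc q).get ⟨i + 1, hq⟩ ≤ (rootsDesc p).get ⟨i, hp⟩))

namespace Stmt9

/-- descents as a finset of `Fin (n-1)` (0-based positions). -/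
def D {n : ℕ} (w : Equiv.Perm (Fin n)) : Finset (Fin (n - 1)) :=
  Finset.univ.filter (fun i : Fin (n - 1) =>
      w ⟨i.val + 1, by have := i.isLt; omega⟩ < w ⟨i.val, by have := i.isLt; omega⟩)

lemma descSet_eq {n : ℕ} (w : Equiv.Perm (Fin n)) :
    descSet w = (D w).image (fun i => i.val + 1) := rfl

lemma descSet_card {n : ℕ} (w : Equiv.Perm (Fin n)) :
    (descSet w).card = (D w).card := by
  rw [descSet_eq, Finset.card_image_of_injective _ (fun a b h => Fin.ext (by omega))]

lemma mem_D_iff {n : ℕ} (w : Equiv.Perm (Fin n)) (i : Fin (n - 1)) :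
    i ∈ D w ↔ w ⟨i.val + 1, by have := i.isLt; omega⟩ < w ⟨i.val, by have := i.isLt; omega⟩ := by
  simp [D]

lemma descSet_subset_iff {n r : ℕ} (w : Equiv.Perm (Fin n)) :
    descSet w ⊆ Finset.Icc 1 r ↔
      ∀ i : Fin (n - 1), r ≤ i.val →
        w ⟨i.val, by have := i.isLt; omega⟩ < w ⟨i.val + 1, by have := i.isLt; omega⟩ := by
  rw [descSet_eq, Finset.image_subset_iff]
  constructor
  · intro h i hi
    by_contra hc
    have hmem : i ∈ D w := by
      rw [mem_D_iff]
      have hne : w ⟨i.val + 1, by have := i.isLt; omega⟩ ≠ w ⟨i.val, by have := i.isLt; omega⟩ :=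
        fun he => by
          have := w.injective he
          simp only [Fin.mk.injEq] at this
          omega
      exact lt_of_le_of_ne (not_lt.mp hc) hne
    have := h i hmem
    simp only [Finset.mem_Icc] at this
    omega
  · intro h i hi
    simp only [Finset.mem_Icc]
    refine ⟨by omega, ?_⟩
    by_contra hc
    have := h i (by omega)
    rw [mem_D_iff] at hi
    exact absurd hi (not_lt.mpr (le_of_lt this))


variable {n r : ℕ}

/-- index `k ≤ r` as an element of `Fin n`. -/
def pos (hrn : r + 1 ≤ n) (k : Fin (r + 1)) : Fin n := ⟨k.val, by omega⟩

/-- `j ≤ (emb k)` for the order embedding of a `k`-set. -/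
lemma le_orderEmbOfFin {n m : ℕ} (S : Finset (Fin n)) (hS : S.card = m) (k : Fin m) :
    k.val ≤ (S.orderEmbOfFin hS k).val := by
  obtain ⟨k, hk⟩ := k
  induction k with
  | zero => simp
  | succ k ih =>
    have h1 : (S.orderEmbOfFin hS ⟨k, by omega⟩).val < (S.orderEmbOfFin hS ⟨k+1, hk⟩).val := by
      have := (S.orderEmbOfFin hS).strictMono (show (⟨k, by omega⟩ : Fin m) < ⟨k+1, hk⟩ by
        simp [Fin.lt_def])
      exact this
    have := ih (by omega)
    simp only [Fin.val_mk] at *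
    omega

/-- if `S` contains all values `≤ k.val`, then `emb k ≤ k`. -/
lemma orderEmbOfFin_le {m : ℕ} (hrn : m ≤ n) (S : Finset (Fin n)) (hS : S.card = m)
    (k : Fin m) (hA : ∀ x : Fin n, x.val ≤ k.val → x ∈ S) :
    (S.orderEmbOfFin hS k).val ≤ k.val := by
  by_contra hc
  push_neg at hc
  have hg : ∀ t : Fin (k.val + 1),
      (((S.orderIsoOfFin hS).symm ⟨⟨t.val, by omega⟩, hA _ (by simp; omega)⟩)).val < k.val := by
    intro t
    have hlt : (⟨⟨t.val, by omega⟩, hA ⟨t.val, by omega⟩ (by simp; omega)⟩ : {x // x ∈ S}) <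
        S.orderIsoOfFin hS k := by
      rw [Subtype.mk_lt_mk]
      have : ((S.orderIsoOfFin hS k : Fin n)) = S.orderEmbOfFin hS k :=
        Finset.coe_orderIsoOfFin_apply S hS k
      rw [show ((S.orderIsoOfFin hS k : {x // x ∈ S}) : Fin n) = S.orderEmbOfFin hS k from this]
      simp only [Fin.lt_def]
      omega
    have := (S.orderIsoOfFin hS).symm.strictMono hlt
    simpa using this
  set g : Fin (k.val + 1) → Fin k.val := fun t =>
    ⟨(((S.orderIsoOfFin hS).symm ⟨⟨t.val, by omega⟩, hA _ (by simp; omega)⟩)).val, hg t⟩ with hgdef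
  have hginj : Function.Injective g := by
    intro a b hab
    simp only [hgdef, Fin.mk.injEq] at hab
    have := (S.orderIsoOfFin hS).symm.injective (Fin.ext hab : _ = _)
    simp only [Subtype.mk.injEq, Fin.mk.injEq] at this
    exact Fin.ext this
  have := Fintype.card_le_of_injective g hginj
  simp at this


/-- the set of values in the first `r+1` positions. -/
def SOf (hrn : r + 1 ≤ n) (w : Equiv.Perm (Fin n)) : Finset (Fin n) :=
  Finset.image (fun k : Fin (r + 1) => w (pos hrn k)) Finset.univ

lemma mem_SOf (hrn : r + 1 ≤ n) (w : Equiv.Perm (Fin n)) (k : Fin (r + 1)) :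
    w (pos hrn k) ∈ SOf hrn w :=
  Finset.mem_image_of_mem _ (Finset.mem_univ k)

lemma SOf_card (hrn : r + 1 ≤ n) (w : Equiv.Perm (Fin n)) : (SOf hrn w).card = r + 1 := by
  rw [SOf, Finset.card_image_of_injective _
    (fun a b h => by
      have := w.injective h
      simp only [pos, Fin.mk.injEq] at this
      exact Fin.ext this)]
  simp

def uFun (hrn : r + 1 ≤ n) (w : Equiv.Perm (Fin n)) : Fin (r + 1) → Fin (r + 1) := fun k =>
  Fin.rev (((SOf hrn w).orderIsoOfFin (SOf_card hrn w)).symm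
    ⟨w (pos hrn k.rev), mem_SOf hrn w k.rev⟩)

lemma uFun_inj (hrn : r + 1 ≤ n) (w : Equiv.Perm (Fin n)) : Function.Injective (uFun hrn w) := by
  intro a b hab
  simp only [uFun] at hab
  have h1 := Fin.rev_injective hab
  have h2 := ((SOf hrn w).orderIsoOfFin (SOf_card hrn w)).symm.injective h1
  simp only [Subtype.mk.injEq] at h2
  have h3 := w.injective h2
  simp only [pos, Fin.mk.injEq] at h3
  exact Fin.rev_injective (Fin.ext h3)

/-- the standardization (reversed-complemented) of `w` on the first `r+1` positions. -/
def uOf (hrn : r + 1 ≤ n) (w : Equiv.Perm (Fin n)) : Equiv.Perm (Fin (r + 1)) :=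
  Equiv.ofBijective _ (Finite.injective_iff_bijective.mp (uFun_inj hrn w))

lemma emb_uOf (hrn : r + 1 ≤ n) (w : Equiv.Perm (Fin n)) (k : Fin (r + 1)) :
    (SOf hrn w).orderEmbOfFin (SOf_card hrn w) (Fin.rev (uOf hrn w k)) = w (pos hrn k.rev) := by
  have : Fin.rev (uOf hrn w k) = ((SOf hrn w).orderIsoOfFin (SOf_card hrn w)).symm
      ⟨w (pos hrn k.rev), mem_SOf hrn w k.rev⟩ := by
    simp [uOf, Equiv.ofBijective_apply, uFun, Fin.rev_rev]
  rw [this, ← Finset.coe_orderIsoOfFin_apply, OrderIso.apply_symm_apply]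

lemma card_compl_eq (hrn : r + 1 ≤ n) (S : Finset (Fin n)) (hS : S.card = r + 1) :
    Sᶜ.card = n - (r + 1) := by
  rw [Finset.card_compl, hS, Fintype.card_fin]

/-- the permutation built from `u ∈ S_{r+1}` and a value set `S`. -/
def bFun (hrn : r + 1 ≤ n) (u : Equiv.Perm (Fin (r + 1))) (S : Finset (Fin n))
    (hS : S.card = r + 1) : Fin n → Fin n := fun p =>
  if h : p.val ≤ r then S.orderEmbOfFin hS (Fin.rev (u ⟨r - p.val, by omega⟩))
  else Sᶜ.orderEmbOfFin (card_compl_eq hrn S hS) ⟨p.val - (r + 1), by have := p.isLt; omega⟩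

lemma bFun_inj (hrn : r + 1 ≤ n) (u : Equiv.Perm (Fin (r + 1))) (S : Finset (Fin n))
    (hS : S.card = r + 1) : Function.Injective (bFun hrn u S hS) := by
  intro p q hpq
  simp only [bFun] at hpq
  by_cases hp : p.val ≤ r <;> by_cases hq : q.val ≤ r <;> simp only [hp, hq, dif_pos, dif_neg,
    dite_true, dite_false, if_true, if_false] at hpq
  · have h1 := (S.orderEmbOfFin hS).injective hpq
    have h2 := Fin.rev_injective h1
    have h3 := u.injective h2
    simp only [Fin.mk.injEq] at h3
    exact Fin.ext (by omega)
  · exfalso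
    have h1 : (S.orderEmbOfFin hS) (Fin.rev (u ⟨r - p.val, by omega⟩)) ∈ S :=
      Finset.orderEmbOfFin_mem _ _ _
    have h2 : Sᶜ.orderEmbOfFin (card_compl_eq hrn S hS)
        ⟨q.val - (r + 1), by have := q.isLt; omega⟩ ∈ Sᶜ := Finset.orderEmbOfFin_mem _ _ _
    rw [hpq] at h1
    exact (Finset.mem_compl.mp h2) h1
  · exfalso
    have h1 : (S.orderEmbOfFin hS) (Fin.rev (u ⟨r - q.val, by omega⟩)) ∈ S :=
      Finset.orderEmbOfFin_mem _ _ _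
    have h2 : Sᶜ.orderEmbOfFin (card_compl_eq hrn S hS)
        ⟨p.val - (r + 1), by have := p.isLt; omega⟩ ∈ Sᶜ := Finset.orderEmbOfFin_mem _ _ _
    rw [hpq] at h2
    exact (Finset.mem_compl.mp h2) h1
  · have h1 := (Sᶜ.orderEmbOfFin (card_compl_eq hrn S hS)).injective hpq
    simp only [Fin.mk.injEq] at h1
    exact Fin.ext (by omega)

def bPerm (hrn : r + 1 ≤ n) (u : Equiv.Perm (Fin (r + 1))) (S : Finset (Fin n))
    (hS : S.card = r + 1) : Equiv.Perm (Fin n) :=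
  Equiv.ofBijective _ (Finite.injective_iff_bijective.mp (bFun_inj hrn u S hS))

lemma bPerm_apply (hrn : r + 1 ≤ n) (u : Equiv.Perm (Fin (r + 1))) (S : Finset (Fin n))
    (hS : S.card = r + 1) (p : Fin n) : bPerm hrn u S hS p = bFun hrn u S hS p := rfl


/-- the validity condition on a pair `(u, S)`. -/
def Vc (u : Equiv.Perm (Fin (r + 1))) (S : Finset (Fin n)) : Prop :=
  ∀ x : Fin n, x.val + (u 0).val ≤ r → x ∈ S

lemma bPerm_lt (hrn : r + 1 ≤ n) (u : Equiv.Perm (Fin (r + 1))) (S : Finset (Fin n))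
    (hS : S.card = r + 1) (p : Fin n) (hp : p.val ≤ r) :
    bPerm hrn u S hS p = S.orderEmbOfFin hS (Fin.rev (u ⟨r - p.val, by omega⟩)) := by
  rw [bPerm_apply, bFun, dif_pos hp]

lemma bPerm_gt (hrn : r + 1 ≤ n) (u : Equiv.Perm (Fin (r + 1))) (S : Finset (Fin n))
    (hS : S.card = r + 1) (p : Fin n) (hp : ¬ p.val ≤ r) :
    bPerm hrn u S hS p = Sᶜ.orderEmbOfFin (card_compl_eq hrn S hS)
      ⟨p.val - (r + 1), by have := p.isLt; omega⟩ := by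
  rw [bPerm_apply, bFun, dif_neg hp]

set_option maxHeartbeats 1000000 in
/-- P1: no descents at positions ≥ r. -/
lemma bPerm_no_late_descent (hrn : r + 1 ≤ n) (u : Equiv.Perm (Fin (r + 1)))
    (S : Finset (Fin n)) (hS : S.card = r + 1) (hV : Vc u S)
    (i : Fin (n - 1)) (hi : r ≤ i.val) :
    bPerm hrn u S hS ⟨i.val, by have := i.isLt; omega⟩ <
      bPerm hrn u S hS ⟨i.val + 1, by have := i.isLt; omega⟩ := by
  have hin := i.isLt
  have hu0 : (u 0).val < r + 1 := (u 0).isLt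
  have hjv := Fin.val_rev (u 0)
  rcases eq_or_lt_of_le hi with he | hl
  · -- i.val = r : boundary
    rw [bPerm_lt hrn u S hS _ (by simp; omega), bPerm_gt hrn u S hS _ (by simp; omega)]
    have h0 : (⟨r - (⟨i.val, by omega⟩ : Fin n).val, by omega⟩ : Fin (r + 1)) = 0 := by
      apply Fin.ext; simp; omega
    rw [h0]
    have hA : ∀ x : Fin n, x.val ≤ (Fin.rev (u 0)).val → x ∈ S := by
      intro x hx
      exact hV x (by omega)
    have h1 : (S.orderEmbOfFin hS (Fin.rev (u 0))).val ≤ (Fin.rev (u 0)).val :=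
      orderEmbOfFin_le hrn S hS _ hA
    have h2 : ∀ t : Fin (n - (r + 1)),
        (Fin.rev (u 0)).val < (Sᶜ.orderEmbOfFin (card_compl_eq hrn S hS) t).val := by
      intro t
      by_contra hc
      push_neg at hc
      exact (Finset.mem_compl.mp (Finset.orderEmbOfFin_mem _ _ _)) (hA _ hc)
    rw [Fin.lt_def]
    exact lt_of_le_of_lt h1 (h2 _)
  · -- i.val > r : both in the tail
    rw [bPerm_gt hrn u S hS _ (by simp; omega), bPerm_gt hrn u S hS _ (by simp; omega)]
    apply (Sᶜ.orderEmbOfFin (card_compl_eq hrn S hS)).strictMono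
    simp only [Fin.mk_lt_mk]
    simp
    omega

/-- descent criterion in the head. -/
lemma bPerm_desc_iff (hrn : r + 1 ≤ n) (u : Equiv.Perm (Fin (r + 1))) (S : Finset (Fin n))
    (hS : S.card = r + 1) (i : ℕ) (hi : i < r) (hin : i < n - 1) :
    (bPerm hrn u S hS ⟨i + 1, by omega⟩ < bPerm hrn u S hS ⟨i, by omega⟩ ↔
      u ⟨r - i, by omega⟩ < u ⟨r - i - 1, by omega⟩) := by
  rw [bPerm_lt hrn u S hS _ (by simp; omega), bPerm_lt hrn u S hS _ (by simp; omega)]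
  rw [OrderEmbedding.lt_iff_lt, Fin.rev_lt_rev]
  have e1 : (⟨r - (⟨i, by omega⟩ : Fin n).val, by omega⟩ : Fin (r + 1)) = ⟨r - i, by omega⟩ := by
    apply Fin.ext; simp
  have e2 : (⟨r - (⟨i + 1, by omega⟩ : Fin n).val, by omega⟩ : Fin (r + 1)) =
      ⟨r - i - 1, by omega⟩ := by
    apply Fin.ext; simp; omega
  rw [e1, e2]

lemma bPerm_descSet_subset (hrn : r + 1 ≤ n) (u : Equiv.Perm (Fin (r + 1)))
    (S : Finset (Fin n)) (hS : S.card = r + 1) (hV : Vc u S) :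
    descSet (bPerm hrn u S hS) ⊆ Finset.Icc 1 r :=
  (descSet_subset_iff _).mpr (fun i hi => bPerm_no_late_descent hrn u S hS hV i hi)

/-- single increasing step past position r. -/
lemma step_tail {w : Equiv.Perm (Fin n)} (hw : descSet w ⊆ Finset.Icc 1 r)
    (k : ℕ) (hk : k < n - 1) (hrk : r ≤ k) :
    w ⟨k, by omega⟩ < w ⟨k + 1, by omega⟩ :=
  (descSet_subset_iff w).mp hw ⟨k, hk⟩ hrk

/-- monotonicity past position r. -/
lemma mono_tail {w : Equiv.Perm (Fin n)} (hw : descSet w ⊆ Finset.Icc 1 r)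
    (p q : Fin n) (hp : r ≤ p.val) (hpq : p.val < q.val) : w p < w q := by
  have key : ∀ d : ℕ, ∀ q : Fin n, q.val = p.val + d + 1 → w p < w q := by
    intro d
    induction d with
    | zero =>
      intro q hq
      have hqn := q.isLt
      have hq' : q = ⟨p.val + 1, by omega⟩ := Fin.ext hq
      rw [hq']
      exact step_tail hw p.val (by omega) hp
    | succ d ih =>
      intro q hq
      have hqn := q.isLt
      have h1 : w p < w ⟨p.val + d + 1, by omega⟩ := ih ⟨p.val + d + 1, by omega⟩ (by simp)
      have h2 : w ⟨p.val + d + 1, by omega⟩ < w ⟨p.val + d + 1 + 1, by omega⟩ :=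
        step_tail hw (p.val + d + 1) (by omega) (by omega)
      have hq' : q = ⟨p.val + d + 1 + 1, by omega⟩ := Fin.ext (by simp; omega)
      rw [hq']
      exact lt_trans h1 h2
  exact key (q.val - p.val - 1) q (by omega)

set_option maxHeartbeats 1000000 in
/-- P2: the number of descents is preserved. -/
lemma card_D_bPerm (hrn : r + 1 ≤ n) (u : Equiv.Perm (Fin (r + 1))) (S : Finset (Fin n))
    (hS : S.card = r + 1) (hV : Vc u S) :
    (D (bPerm hrn u S hS)).card = (D u).card := by
  have hlate : ∀ a : Fin (n - 1), a ∈ D (bPerm hrn u S hS) → a.val < r := by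
    intro a ha
    rw [mem_D_iff] at ha
    by_contra hc
    push_neg at hc
    exact absurd ha (not_lt.mpr (le_of_lt (bPerm_no_late_descent hrn u S hS hV a hc)))
  rcases Nat.eq_zero_or_pos r with rfl | hr
  · have h1 : D (bPerm hrn u S hS) = ∅ := by
      rw [Finset.eq_empty_iff_forall_notMem]
      intro a ha
      exact absurd (hlate a ha) (by omega)
    have h2 : (D u) = ∅ := by
      rw [Finset.eq_empty_iff_forall_notMem]
      intro a _
      exact absurd a.isLt (by omega)
    rw [h1, h2]
    rfl
  · apply Finset.card_nbij' (fun a => ⟨r - 1 - a.val, by omega⟩)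
      (fun k => ⟨r - 1 - k.val, by have := k.isLt; omega⟩)
    · -- forward maps-to
      intro a ha
      have halt := hlate a ha
      have han := a.isLt
      simp only [Finset.mem_coe] at ha ⊢
      rw [mem_D_iff] at ha
      rw [mem_D_iff]
      have hd := (bPerm_desc_iff hrn u S hS a.val halt han).mp ha
      have e1 : (⟨(⟨r - 1 - a.val, by omega⟩ : Fin ((r + 1) - 1)).val + 1, by omega⟩ :
          Fin (r + 1)) = ⟨r - a.val, by omega⟩ := by
        apply Fin.ext; simp; omega
      have e2 : (⟨(⟨r - 1 - a.val, by omega⟩ : Fin ((r + 1) - 1)).val, by omega⟩ :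
          Fin (r + 1)) = ⟨r - a.val - 1, by omega⟩ := by
        apply Fin.ext; simp; omega
      rw [e1, e2]
      exact hd
    · -- backward maps-to
      intro k hk
      have hkr := k.isLt
      simp only [Finset.mem_coe] at hk ⊢
      rw [mem_D_iff] at hk
      rw [mem_D_iff]
      have hd := (bPerm_desc_iff hrn u S hS (r - 1 - k.val) (by omega) (by omega)).mpr (by
        have e1 : (⟨r - (r - 1 - k.val), by omega⟩ : Fin (r + 1)) = ⟨k.val + 1, by omega⟩ := by
          apply Fin.ext; simp; omega
        have e2 : (⟨r - (r - 1 - k.val) - 1, by omega⟩ : Fin (r + 1)) = ⟨k.val, by omega⟩ := by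
          apply Fin.ext; simp; omega
        rw [e1, e2]
        exact hk)
      exact hd
    · intro a ha
      have halt := hlate a ha
      apply Fin.ext; simp; omega
    · intro k hk
      have hkr := k.isLt
      apply Fin.ext; simp; omega

/-- Q2: the pair extracted from `w` satisfies the validity condition. -/
lemma Vc_uOf (hrn : r + 1 ≤ n) (w : Equiv.Perm (Fin n))
    (hw : descSet w ⊆ Finset.Icc 1 r) : Vc (uOf hrn w) (SOf hrn w) := by
  intro x hx
  have hu0 : (uOf hrn w 0).val < r + 1 := (uOf hrn w 0).isLt
  have hjv := Fin.val_rev (uOf hrn w 0)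
  have hkey := emb_uOf hrn w 0
  have hle := le_orderEmbOfFin (SOf hrn w) (SOf_card hrn w) (Fin.rev (uOf hrn w 0))
  rw [hkey] at hle
  have hpos : pos hrn (Fin.rev 0) = ⟨r, by omega⟩ := by
    apply Fin.ext
    simp [pos, Fin.val_rev]
  rw [hpos] at hle
  by_contra hxS
  have hwp : w (w.symm x) = x := w.apply_symm_apply x
  have hpbig : ¬ (w.symm x).val ≤ r := by
    intro hple
    apply hxS
    have hh : pos hrn ⟨(w.symm x).val, by omega⟩ = w.symm x := rfl
    rw [← hwp, ← hh]
    exact mem_SOf hrn w _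
  have hmono := mono_tail hw ⟨r, by omega⟩ (w.symm x) (by simp) (by simp; omega)
  rw [hwp, Fin.lt_def] at hmono
  omega


lemma orderEmbOfFin_congr {S₁ S₂ : Finset (Fin n)} (h : S₁ = S₂) {m : ℕ}
    (h₁ : S₁.card = m) (h₂ : S₂.card = m) (x : Fin m) :
    S₁.orderEmbOfFin h₁ x = S₂.orderEmbOfFin h₂ x := by subst h; rfl

/-- roundtrip 1 : rebuilding `w` from its pair. -/
lemma bPerm_uOf (hrn : r + 1 ≤ n) (w : Equiv.Perm (Fin n))
    (hw : descSet w ⊆ Finset.Icc 1 r) :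
    bPerm hrn (uOf hrn w) (SOf hrn w) (SOf_card hrn w) = w := by
  apply Equiv.ext
  intro p
  have hpn := p.isLt
  by_cases hp : p.val ≤ r
  · rw [bPerm_lt _ _ _ _ p hp]
    have hk := emb_uOf hrn w ⟨r - p.val, by omega⟩
    rw [hk]
    congr 1
    apply Fin.ext
    simp [pos, Fin.val_rev]
    omega
  · rw [bPerm_gt _ _ _ _ p hp]
    have hg : ∀ t : Fin (n - (r + 1)),
        (fun t : Fin (n - (r + 1)) => w ⟨t.val + (r + 1), by have := t.isLt; omega⟩) t
          ∈ (SOf hrn w)ᶜ := by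
      intro t
      rw [Finset.mem_compl]
      intro hmem
      rw [SOf, Finset.mem_image] at hmem
      obtain ⟨k, _, hk⟩ := hmem
      have := w.injective hk
      have hv : (pos hrn k).val = t.val + (r + 1) := by rw [this]
      have := k.isLt
      simp [pos] at hv
      omega
    have hmono : StrictMono
        (fun t : Fin (n - (r + 1)) => w ⟨t.val + (r + 1), by have := t.isLt; omega⟩) := by
      intro a b hab
      rw [Fin.lt_def] at hab
      exact mono_tail hw _ _ (by simp; omega) (by simp; omega)
    have huniq := Finset.orderEmbOfFin_unique
      (card_compl_eq hrn (SOf hrn w) (SOf_card hrn w)) hg hmono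
    have := congrFun huniq ⟨p.val - (r + 1), by omega⟩
    simp only at this
    rw [← this]
    congr 1
    apply Fin.ext
    simp
    omega

/-- roundtrip 2a. -/
lemma SOf_bPerm (hrn : r + 1 ≤ n) (u : Equiv.Perm (Fin (r + 1))) (S : Finset (Fin n))
    (hS : S.card = r + 1) : SOf hrn (bPerm hrn u S hS) = S := by
  apply Finset.eq_of_subset_of_card_le
  · intro y hy
    rw [SOf, Finset.mem_image] at hy
    obtain ⟨k, _, hk⟩ := hy
    rw [← hk, bPerm_lt hrn u S hS (pos hrn k) (by simp [pos]; omega)]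
    exact Finset.orderEmbOfFin_mem _ _ _
  · rw [SOf_card hrn _, hS]

/-- roundtrip 2b. -/
lemma uOf_bPerm (hrn : r + 1 ≤ n) (u : Equiv.Perm (Fin (r + 1))) (S : Finset (Fin n))
    (hS : S.card = r + 1) : uOf hrn (bPerm hrn u S hS) = u := by
  apply Equiv.ext
  intro k
  have hk := k.isLt
  have h1 := emb_uOf hrn (bPerm hrn u S hS) k
  have h2 : bPerm hrn u S hS (pos hrn (Fin.rev k)) = S.orderEmbOfFin hS (Fin.rev (u k)) := by
    rw [bPerm_lt hrn u S hS _ (by simp [pos, Fin.val_rev]; try omega)]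
    have e : (⟨r - (pos hrn (Fin.rev k)).val, by omega⟩ : Fin (r + 1)) = k := by
      apply Fin.ext; simp [pos, Fin.val_rev]; omega
    rw [e]
  have h3 : ∀ x, (SOf hrn (bPerm hrn u S hS)).orderEmbOfFin
      (SOf_card hrn (bPerm hrn u S hS)) x = S.orderEmbOfFin hS x :=
    fun x => orderEmbOfFin_congr (SOf_bPerm hrn u S hS) _ hS x
  have h4 : S.orderEmbOfFin hS (Fin.rev (uOf hrn (bPerm hrn u S hS) k)) =
      S.orderEmbOfFin hS (Fin.rev (u k)) := by
    rw [← h3, h1, h2]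
  exact Fin.rev_injective ((S.orderEmbOfFin hS).injective h4)


/-- counting the valid sets for a fixed `u`. -/
lemma card_valid (hrn : r + 1 ≤ n) (u : Equiv.Perm (Fin (r + 1))) :
    (Finset.univ.filter (fun S : Finset (Fin n) => S.card = r + 1 ∧ Vc u S)).card
      = (n - r + (u 0).val - 1).choose (u 0).val := by
  have hi : (u 0).val ≤ r := by have := (u 0).isLt; omega
  set i := (u 0).val with hidef
  set j := r - i with hjdef
  have hjn : j < n := by omega
  have hcard : (Finset.univ.filter (fun S : Finset (Fin n) => S.card = r + 1 ∧ Vc u S)).card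
      = (Finset.powersetCard (r - j) (Finset.Ioi (⟨j, hjn⟩ : Fin n))).card := by
    apply Finset.card_nbij' (fun S => S.filter (fun x => j < x.val))
      (fun T => T ∪ Finset.Iic ⟨j, hjn⟩)
    · -- forward maps-to
      intro S hS
      simp only [Finset.mem_coe] at hS ⊢
      rw [Finset.mem_filter] at hS
      obtain ⟨-, hSc, hSV⟩ := hS
      rw [Finset.mem_powersetCard]
      constructor
      · intro x hx
        rw [Finset.mem_filter] at hx
        rw [Finset.mem_Ioi, Fin.lt_def]
        exact hx.2
      · have hsplit := Finset.card_filter_add_card_filter_not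
          (s := S) (p := fun x => j < x.val)
        have hIic : S.filter (fun x => ¬ j < x.val) = Finset.Iic (⟨j, hjn⟩ : Fin n) := by
          ext x
          rw [Finset.mem_filter, Finset.mem_Iic, Fin.le_def]
          constructor
          · intro hx
            simp only [Fin.val_mk]
            simp at hx
            omega
          · intro hx
            simp only [Fin.val_mk] at hx
            exact ⟨hSV x (by omega), by omega⟩
        rw [hIic, Fin.card_Iic] at hsplit
        simp only [Fin.val_mk] at hsplit
        omega
    · -- backward maps-to
      intro T hT
      simp only [Finset.mem_coe] at hT ⊢
      rw [Finset.mem_powersetCard] at hT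
      obtain ⟨hTsub, hTc⟩ := hT
      rw [Finset.mem_filter]
      refine ⟨Finset.mem_univ _, ?_, ?_⟩
      · rw [Finset.card_union_of_disjoint, hTc, Fin.card_Iic]
        · simp only [Fin.val_mk]; omega
        · rw [Finset.disjoint_left]
          intro x hx hx2
          have h1 := hTsub hx
          rw [Finset.mem_Ioi, Fin.lt_def] at h1
          rw [Finset.mem_Iic, Fin.le_def] at hx2
          simp only [Fin.val_mk] at h1 hx2
          omega
      · intro x hx
        apply Finset.mem_union_right
        rw [Finset.mem_Iic, Fin.le_def]
        simp only [Fin.val_mk]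
        omega
    · -- left inverse
      intro S hS
      simp only [Finset.mem_coe] at hS ⊢
      rw [Finset.mem_filter] at hS
      obtain ⟨-, hSc, hSV⟩ := hS
      ext x
      rw [Finset.mem_union, Finset.mem_filter, Finset.mem_Iic, Fin.le_def]
      simp only [Fin.val_mk]
      by_cases hx : j < x.val
      · constructor
        · rintro (⟨h, -⟩ | h); exact h; omega
        · intro h; exact Or.inl ⟨h, hx⟩
      · constructor
        · intro _; exact hSV x (by omega)
        · intro _; exact Or.inr (by omega)
    · -- right inverse
      intro T hT
      simp only [Finset.mem_coe] at hT ⊢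
      rw [Finset.mem_powersetCard] at hT
      obtain ⟨hTsub, -⟩ := hT
      ext x
      rw [Finset.mem_filter, Finset.mem_union, Finset.mem_Iic, Fin.le_def]
      simp only [Fin.val_mk]
      constructor
      · rintro ⟨h1 | h1, h2⟩; exact h1; omega
      · intro h
        have := hTsub h
        rw [Finset.mem_Ioi, Fin.lt_def] at this
        simp only [Fin.val_mk] at this
        exact ⟨Or.inl h, this⟩
  rw [hcard, Finset.card_powersetCard, Fin.card_Ioi]
  simp only [Fin.val_mk]
  congr 1 <;> omega


lemma descSet_subset_Icc (u : Equiv.Perm (Fin (r + 1))) : descSet u ⊆ Finset.Icc 1 r := by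
  rw [descSet_eq, Finset.image_subset_iff]
  intro i _
  rw [Finset.mem_Icc]
  have := i.isLt
  omega

end Stmt9

open Stmt9 in
/-- For `0 ≤ r ≤ n-1` and `T = [r] = {1,…,r} ⊆ [n-1]`,
`A^T_n(x) = Σ_{i=0}^r binom(n-r+i-1, i)·p_{r,i}(x)`, where
`p_{r,i}(x) = Σ x^{des(w)}` over all `w ∈ S_{r+1}` with `w(1) = i+1`
(no descent restriction, i.e. `Des(w) ⊆ [r]`). -/
theorem stmt9 (n r : ℕ) (hn : 0 < n) (hr : r ≤ n - 1) :
    Apoly n (Finset.Icc 1 r) =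
      ∑ i ∈ Finset.range (r + 1),
        C (((n - r + i - 1).choose i : ℝ)) * ppoly r i (Finset.Icc 1 r) := by
  have hrn : r + 1 ≤ n := by omega
  have hpp : ∀ i : ℕ, ppoly r i (Finset.Icc 1 r) =
      ∑ u ∈ Finset.univ.filter (fun u : Equiv.Perm (Fin (r + 1)) => (u 0 : ℕ) = i),
        (X : Polynomial ℝ) ^ (descSet u).card := by
    intro i
    unfold ppoly
    apply Finset.sum_congr
    · apply Finset.filter_congr
      intro u _
      simp [descSet_subset_Icc u]
    · intros; rfl
  have h2 : ∑ i ∈ Finset.range (r + 1),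
        C (((n - r + i - 1).choose i : ℝ)) * ppoly r i (Finset.Icc 1 r)
      = ∑ u ∈ (Finset.univ : Finset (Equiv.Perm (Fin (r + 1)))),
          C (((n - r + (u 0).val - 1).choose (u 0).val : ℝ)) * X ^ (descSet u).card := by
    rw [← Finset.sum_fiberwise_of_maps_to
      (g := fun u : Equiv.Perm (Fin (r + 1)) => (u 0).val)
      (fun u _ => Finset.mem_range.mpr (u 0).isLt)]
    apply Finset.sum_congr rfl
    intro i _
    rw [hpp i, Finset.mul_sum]
    apply Finset.sum_congr rfl
    intro u hu
    have h := (Finset.mem_filter.mp hu).2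
    rw [h]
  have h3 : ∀ u : Equiv.Perm (Fin (r + 1)),
      C (((n - r + (u 0).val - 1).choose (u 0).val : ℝ)) * (X : Polynomial ℝ) ^ (descSet u).card
      = ∑ _S ∈ Finset.univ.filter (fun S : Finset (Fin n) => S.card = r + 1 ∧ Vc u S),
          (X : Polynomial ℝ) ^ (descSet u).card := by
    intro u
    rw [Finset.sum_const, card_valid hrn u, nsmul_eq_mul]
    rw [map_natCast C]
  rw [h2, Finset.sum_congr rfl (fun u _ => h3 u), Finset.sum_sigma']
  unfold Apoly
  refine Finset.sum_bij'
    (fun w _ => (⟨uOf hrn w, SOf hrn w⟩ :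
      Σ _ : Equiv.Perm (Fin (r + 1)), Finset (Fin n)))
    (fun p hp => bPerm hrn p.1 p.2
      ((Finset.mem_filter.mp (Finset.mem_sigma.mp hp).2).2.1)) ?pc1 ?pc2 ?pc3 ?pc4 ?pc5
  case pc1 =>
    intro w hw
    have hwsub := (Finset.mem_filter.mp hw).2
    exact Finset.mem_sigma.mpr ⟨Finset.mem_univ _, Finset.mem_filter.mpr
      ⟨Finset.mem_univ _, SOf_card hrn w, Vc_uOf hrn w hwsub⟩⟩
  case pc2 =>
    intro p hp
    have hm := (Finset.mem_filter.mp (Finset.mem_sigma.mp hp).2).2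
    exact Finset.mem_filter.mpr ⟨Finset.mem_univ _,
      bPerm_descSet_subset hrn p.1 p.2 hm.1 hm.2⟩
  case pc3 =>
    intro w hw
    exact bPerm_uOf hrn w (Finset.mem_filter.mp hw).2
  case pc4 =>
    intro p hp
    obtain ⟨u, S⟩ := p
    have hm := (Finset.mem_filter.mp (Finset.mem_sigma.mp hp).2).2
    exact Sigma.ext (uOf_bPerm hrn u S hm.1) (heq_of_eq (SOf_bPerm hrn u S hm.1))
  case pc5 =>
    intro w hw
    have hwsub := (Finset.mem_filter.mp hw).2
    have hc : (descSet w).card = (descSet (uOf hrn w)).card := by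
      rw [descSet_card, descSet_card]
      conv_lhs => rw [← bPerm_uOf hrn w hwsub]
      exact card_D_bPerm hrn (uOf hrn w) (SOf hrn w) (SOf_card hrn w) (Vc_uOf hrn w hwsub)
    rw [hc]
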